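/- Let (ν_n) and (μ_n) be sequences of Borel probability measures on a separable real Banach space such that ν_n(K) ≥ μ_n(K) for every convex symmetric set K and every n, and suppose μ_n converges weakly to some probability measure μ. Then the sequence (ν_n) is tight. -/

import Mathlib

open MeasureTheory Filter Metric
open scoped ENNReal

lemma aux_iInter_compact {Ω : Type*} [MetricSpace Ω] [CompleteSpace Ω]
    (D : ℕ → Set Ω) (hcl : ∀ k, IsClosed (D k))
    (hsub : ∀ k, ∃ L : Set Ω, IsCompact L ∧ D k ⊆ cthickening (1 / (k + 1)) L) :
    IsCompact (⋂ k, D k) := by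
  refine TotallyBounded.isCompact_of_isClosed ?_ (isClosed_iInter hcl)
  rw [Metric.totallyBounded_iff]
  intro ε hε
  obtain ⟨k, hk⟩ : ∃ k : ℕ, 1 / ((k : ℝ) + 1) < ε / 2 := by
    obtain ⟨k, hk⟩ := exists_nat_gt (2 / ε)
    refine ⟨k, ?_⟩
    rw [div_lt_div_iff₀ (by positivity) (by norm_num)]
    have h2 : 2 / ε < (k : ℝ) := hk
    have : 2 < (k : ℝ) * ε := by
      rwa [div_lt_iff₀ hε] at h2
    nlinarith
  obtain ⟨L, hL, hDL⟩ := hsub k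
  obtain ⟨t, htfin, htsub⟩ := (Metric.totallyBounded_iff.mp hL.totallyBounded) (ε / 2) (by positivity)
  refine ⟨t, htfin, ?_⟩
  intro x hx
  have hxD : x ∈ D k := Set.mem_iInter.mp hx k
  have hxth : x ∈ thickening (ε / 2) L :=
    cthickening_subset_thickening' (by positivity) hk L (hDL hxD)
  obtain ⟨z, hzL, hz⟩ := Metric.mem_thickening_iff.mp hxth
  obtain ⟨y, hyt, hy⟩ := Set.mem_iUnion₂.mp (htsub hzL)
  refine Set.mem_iUnion₂.mpr ⟨y, hyt, ?_⟩
  have : dist x y < ε := by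
    have := dist_triangle x z y
    simp only [mem_ball] at hy
    linarith
  simpa [mem_ball] using this

lemma aux_sum {Ω : Type*} [MeasurableSpace Ω] (ρ : Measure Ω) {δ : ℝ} (hδ : 0 ≤ δ)
    (D : ℕ → Set Ω) (h : ∀ k, ρ (D k)ᶜ ≤ ENNReal.ofReal (δ * (1 / 2) ^ (k + 1))) :
    ρ (⋂ k, D k)ᶜ ≤ ENNReal.ofReal δ := by
  rw [Set.compl_iInter]
  refine (measure_iUnion_le _).trans ?_
  have hterm : ∀ k, ρ (D k)ᶜ ≤ ENNReal.ofReal δ * (1 / 2 : ℝ≥0∞) ^ (k + 1) := by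
    intro k
    refine (h k).trans_eq ?_
    rw [ENNReal.ofReal_mul hδ, ENNReal.ofReal_pow (by norm_num)]
    congr 2
    rw [ENNReal.ofReal_div_of_pos (by norm_num)]
    norm_num
  refine (ENNReal.tsum_le_tsum hterm).trans ?_
  rw [ENNReal.tsum_mul_left]
  have : (∑' k : ℕ, (1 / 2 : ℝ≥0∞) ^ (k + 1)) = 1 := by
    have := ENNReal.tsum_geometric (1 / 2 : ℝ≥0∞)
    calc (∑' k : ℕ, (1 / 2 : ℝ≥0∞) ^ (k + 1))
        = (∑' k : ℕ, (1 / 2 : ℝ≥0∞) ^ k * (1 / 2)) := by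
          congr 1; ext k; rw [pow_succ]
      _ = (1 - 1 / 2)⁻¹ * (1 / 2) := by rw [ENNReal.tsum_mul_right, this]
      _ = 1 := by
          rw [ENNReal.sub_half ENNReal.one_ne_top]
          exact ENNReal.inv_mul_cancel (by norm_num) (by norm_num)
  rw [this, mul_one]

lemma aux_hull {Ω : Type*} [NormedAddCommGroup Ω] [NormedSpace ℝ Ω] [CompleteSpace Ω]
    {s : Set Ω} (hs : IsCompact s) :
    ∃ L : Set Ω, IsCompact L ∧ Convex ℝ L ∧ L = -L ∧ s ⊆ L := by
  refine ⟨closure (convexHull ℝ (s ∪ -s)), ?_, (convex_convexHull ℝ _).closure, ?_, ?_⟩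
  · exact TotallyBounded.isCompact_of_isClosed
      (totallyBounded_convexHull.mpr (hs.union hs.neg).totallyBounded).closure isClosed_closure
  · rw [neg_closure, ← convexHull_neg]
    have hneg : -(s ∪ -s) = s ∪ -s := by
      ext x
      simp only [Set.mem_neg, Set.mem_union, neg_neg]
      tauto
    rw [hneg]
  · exact (Set.subset_union_left).trans ((subset_convexHull ℝ _).trans subset_closure)

lemma aux_thickening_neg {Ω : Type*} [SeminormedAddCommGroup Ω] (δ : ℝ) {s : Set Ω}
    (hsym : s = -s) : thickening δ s = -thickening δ s := by
  ext x
  rw [Set.mem_neg, Metric.mem_thickening_iff, Metric.mem_thickening_iff]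
  constructor
  · rintro ⟨z, hz, hd⟩
    have hz' : -z ∈ s := by rw [hsym]; simpa using hz
    exact ⟨-z, hz', by rwa [dist_neg_neg]⟩
  · rintro ⟨z, hz, hd⟩
    have hz' : -z ∈ s := by rw [hsym]; simpa using hz
    exact ⟨-z, hz', by rwa [← dist_neg_neg x (-z), neg_neg] ⟩

lemma aux_tight {Ω : Type*} [MetricSpace Ω] [CompleteSpace Ω]
    [TopologicalSpace.SeparableSpace Ω] [MeasurableSpace Ω] [OpensMeasurableSpace Ω]
    (ρ : Measure Ω) [IsProbabilityMeasure ρ] {η : ℝ} (hη : 0 < η) :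
    ∃ K : Set Ω, IsCompact K ∧ ρ Kᶜ ≤ ENNReal.ofReal η := by
  have hne : Nonempty Ω := by
    by_contra h
    rw [not_nonempty_iff] at h
    have h1 : ρ Set.univ = 1 := measure_univ
    rw [Set.univ_eq_empty_iff.mpr h, measure_empty] at h1
    simp at h1
  set u : ℕ → Ω := TopologicalSpace.denseSeq Ω with hu_def
  have hu : DenseRange u := TopologicalSpace.denseRange_denseSeq Ω
  set A : ℕ → ℕ → Set Ω :=
    fun k m => ⋃ i ∈ Finset.range (m + 1), closedBall (u i) (1 / ((k : ℝ) + 1)) with hA_def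
  have hA_closed : ∀ k m, IsClosed (A k m) := fun k m =>
    Set.Finite.isClosed_biUnion (Finset.finite_toSet _) (fun i _ => Metric.isClosed_closedBall)
  have hεpos : ∀ k : ℕ, (0 : ℝ) < η * (1 / 2) ^ (k + 1) := fun k => by positivity
  have hex : ∀ k : ℕ, ∃ m, 1 - ENNReal.ofReal (η * (1 / 2) ^ (k + 1)) < ρ (A k m) := by
    intro k
    have hAmono : Monotone (A k) := by
      intro a b hab x hx
      obtain ⟨i, hi, hxi⟩ := Set.mem_iUnion₂.mp hx
      refine Set.mem_biUnion (Finset.mem_range.mpr ?_) hxi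
      have := Finset.mem_range.mp hi
      omega
    have hAunion : (⋃ m, A k m) = Set.univ := by
      ext x
      simp only [Set.mem_univ, iff_true, Set.mem_iUnion]
      obtain ⟨i, hi⟩ := hu.exists_dist_lt x (by positivity : (0:ℝ) < 1 / ((k : ℝ) + 1))
      refine ⟨i, Set.mem_biUnion (Finset.self_mem_range_succ i) ?_⟩
      rw [mem_closedBall]
      exact hi.le
    have htend : Tendsto (fun m => ρ (A k m)) atTop (nhds 1) := by
      have := tendsto_measure_iUnion_atTop (μ := ρ) hAmono
      rwa [hAunion, measure_univ] at this
    have hlt : 1 - ENNReal.ofReal (η * (1 / 2) ^ (k + 1)) < 1 :=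
      ENNReal.sub_lt_self ENNReal.one_ne_top one_ne_zero
        (ENNReal.ofReal_pos.mpr (hεpos k)).ne'
    exact (htend.eventually (eventually_gt_nhds hlt)).exists
  choose m hm using hex
  refine ⟨⋂ k, A k (m k), ?_, ?_⟩
  · refine aux_iInter_compact _ (fun k => hA_closed k (m k)) (fun k => ?_)
    refine ⟨u '' ↑(Finset.range (m k + 1)), ((Finset.range (m k + 1)).finite_toSet.image u).isCompact, ?_⟩
    intro x hx
    obtain ⟨i, hi, hxi⟩ := Set.mem_iUnion₂.mp hx
    refine cthickening_subset_of_subset _ ?_ (closedBall_subset_cthickening_singleton (u i) _ hxi)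
    exact Set.singleton_subset_iff.mpr (Set.mem_image_of_mem u hi)
  · refine aux_sum ρ hη.le _ (fun k => ?_)
    have hcompl : ρ (A k (m k))ᶜ = 1 - ρ (A k (m k)) := by
      rw [measure_compl (hA_closed k (m k)).measurableSet (measure_ne_top ρ _), measure_univ]
    rw [hcompl]
    rw [tsub_le_iff_right]
    have := (hm k).le
    rw [tsub_le_iff_right] at this
    calc (1 : ℝ≥0∞) ≤ ρ (A k (m k)) + ENNReal.ofReal (η * (1 / 2) ^ (k + 1)) := this
      _ = ENNReal.ofReal (η * (1 / 2) ^ (k + 1)) + ρ (A k (m k)) := add_comm _ _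

/-- If `(ν n)` and `(μ n)` are Borel probability measures on a separable
real Banach space with `ν n K ≥ μ n K` for every convex symmetric set `K`, and
`μ n → μ` weakly, then the family `(ν n)` is tight. -/
theorem stmt_4 {Ω : Type*} [NormedAddCommGroup Ω] [NormedSpace ℝ Ω] [CompleteSpace Ω]
    [TopologicalSpace.SeparableSpace Ω] [MeasurableSpace Ω] [BorelSpace Ω]
    (ν μseq : ℕ → Measure Ω) (μ : Measure Ω)
    [∀ n, IsProbabilityMeasure (ν n)] [∀ n, IsProbabilityMeasure (μseq n)]
    [IsProbabilityMeasure μ]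
    (hdom : ∀ n, ∀ K : Set Ω, Convex ℝ K → K = -K → μseq n K ≤ ν n K)
    (hweak : ∀ f : BoundedContinuousFunction Ω ℝ,
      Tendsto (fun n => ∫ x, f x ∂(μseq n)) atTop (nhds (∫ x, f x ∂μ))) :
    ∀ δ : ℝ, 0 < δ → ∃ K : Set Ω, IsCompact K ∧ ∀ n, ν n Kᶜ ≤ ENNReal.ofReal δ := by
  intro δ hδ
  have hne : Nonempty Ω := by
    by_contra h
    rw [not_nonempty_iff] at h
    have h1 : μ Set.univ = 1 := measure_univ
    rw [Set.univ_eq_empty_iff.mpr h, measure_empty] at h1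
    simp at h1
  set P : ℕ → ProbabilityMeasure Ω := fun n => ⟨μseq n, inferInstance⟩ with hP_def
  set Pl : ProbabilityMeasure Ω := ⟨μ, inferInstance⟩ with hPl_def
  have htend : Tendsto P atTop (nhds Pl) :=
    ProbabilityMeasure.tendsto_iff_forall_integral_tendsto.mpr hweak
  have key : ∀ k : ℕ, ∃ D : Set Ω, IsClosed D ∧
      (∃ L : Set Ω, IsCompact L ∧ D ⊆ cthickening (1 / ((k : ℝ) + 1)) L) ∧
      ∀ n, ν n Dᶜ ≤ ENNReal.ofReal (δ * (1 / 2) ^ (k + 1)) := by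
    intro k
    set η : ℝ := δ * (1 / 2) ^ (k + 1) with hη_def
    have hηpos : 0 < η := by positivity
    set ε : ℝ := 1 / ((k : ℝ) + 1) with hε_def
    have hεpos : 0 < ε := by positivity
    obtain ⟨x0⟩ := hne
    by_cases htriv : 1 ≤ ENNReal.ofReal η
    · exact ⟨cthickening ε {x0}, isClosed_cthickening,
        ⟨{x0}, isCompact_singleton, subset_rfl⟩, fun n => le_trans prob_le_one htriv⟩
    · push_neg at htriv
      obtain ⟨K0, hK0c, hK0m⟩ := aux_tight μ (half_pos hηpos)
      obtain ⟨L0, hL0c, hL0conv, hL0sym, hKL0⟩ := aux_hull hK0c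
      set G : Set Ω := thickening ε L0 with hG_def
      have hGopen : IsOpen G := isOpen_thickening
      have hGconv : Convex ℝ G := hL0conv.thickening ε
      have hGsym : G = -G := aux_thickening_neg ε hL0sym
      have hμG : 1 - ENNReal.ofReal (η / 2) ≤ μ G := by
        have h1 : (1 : ℝ≥0∞) ≤ μ K0 + ENNReal.ofReal (η / 2) := by
          have := measure_add_measure_compl (μ := μ) hK0c.isClosed.measurableSet
          rw [measure_univ] at this
          calc (1 : ℝ≥0∞) = μ K0 + μ K0ᶜ := this.symm
            _ ≤ μ K0 + ENNReal.ofReal (η / 2) := add_le_add_right hK0m _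
        have h2 : K0 ⊆ G := hKL0.trans (self_subset_thickening hεpos L0)
        exact le_trans (tsub_le_iff_right.mpr h1) (measure_mono h2)
      have hport : (Pl : Measure Ω) G ≤ atTop.liminf (fun n => (P n : Measure Ω) G) :=
        ProbabilityMeasure.le_liminf_measure_open_of_tendsto htend hGopen
      have hstrict : 1 - ENNReal.ofReal η < atTop.liminf (fun n => μseq n G) := by
        refine lt_of_lt_of_le ?_ hport
        refine lt_of_lt_of_le ?_ hμG
        refine ((ENNReal.cancel_of_ne ENNReal.one_ne_top).tsub_lt_tsub_iff_left_of_le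
          (ENNReal.cancel_of_ne ENNReal.ofReal_ne_top) htriv.le).mpr ?_
        rw [ENNReal.ofReal_lt_ofReal_iff hηpos]
        linarith
      obtain ⟨N, hN⟩ := eventually_atTop.mp (eventually_lt_of_lt_liminf hstrict)
      choose Kn hKnc hKnm using fun n => aux_tight (ν n) hηpos
      set L : Set Ω := L0 ∪ ⋃ n ∈ Finset.range N, Kn n with hL_def
      have hLc : IsCompact L :=
        hL0c.union ((Finset.range N).finite_toSet.isCompact_biUnion (fun n _ => hKnc n))
      refine ⟨cthickening ε L, isClosed_cthickening, ⟨L, hLc, subset_rfl⟩, fun n => ?_⟩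
      by_cases hn : N ≤ n
      · have h1 : 1 - ENNReal.ofReal η < μseq n G := hN n hn
        have h2 : μseq n G ≤ ν n G := hdom n G hGconv hGsym
        have hGD : G ⊆ cthickening ε L :=
          (thickening_subset_cthickening ε L0).trans
            (cthickening_subset_of_subset ε Set.subset_union_left)
        have h3 : 1 - ENNReal.ofReal η ≤ ν n (cthickening ε L) :=
          le_trans (h1.le.trans h2) (measure_mono hGD)
        have hcompl : ν n (cthickening ε L)ᶜ = 1 - ν n (cthickening ε L) := by
          rw [measure_compl isClosed_cthickening.measurableSet (measure_ne_top _ _), measure_univ]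
        rw [hcompl, tsub_le_iff_right]
        rw [tsub_le_iff_right] at h3
        calc (1 : ℝ≥0∞) ≤ ν n (cthickening ε L) + ENNReal.ofReal η := h3
          _ = ENNReal.ofReal η + ν n (cthickening ε L) := add_comm _ _
      · push_neg at hn
        have hsubs : Kn n ⊆ cthickening ε L := by
          refine le_trans ?_ (self_subset_cthickening L)
          exact le_trans (Set.subset_biUnion_of_mem (Finset.mem_range.mpr hn)) Set.subset_union_right
        exact le_trans (measure_mono (Set.compl_subset_compl.mpr hsubs)) (hKnm n)
  choose D hDcl hDsub hDm using key
  exact ⟨⋂ k, D k, aux_iInter_compact D hDcl hDsub, fun n => aux_sum (ν n) hδ.le D (fun k => hDm k n)⟩
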